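/- Let H be a complex Hilbert space, T a bounded selfadjoint operator on H, and J a fundamental symmetry on H with ν₋(J) < ∞. Then ν₋(J − T∘J∘T) + ν₋(J) = ν₋(J − T) + ν₋(J + T) in ℕ∪{∞}. In particular, ν₋(J − T∘J∘T) < ∞ if and only if both ν₋(J − T) < ∞ and ν₋(J + T) < ∞. -/

import Mathlib

open ContinuousLinearMap

noncomputable section

/-- The negative index `ν₋(S)` of a bounded operator on a complex Hilbert space: the
supremum of `dim M` over all subspaces `M` on which the quadratic form
`x ↦ ⟨Sx, x⟩` is negative definite. -/
noncomputable def negIndex {H : Type*} [NormedAddCommGroup H] [InnerProductSpace ℂ H]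
    (S : H →L[ℂ] H) : ℕ∞ :=
  ⨆ M : {M : Submodule ℂ H // ∀ x ∈ M, x ≠ 0 → (inner ℂ (S x) x : ℂ).re < 0},
    (Module.rank ℂ (M : Submodule ℂ H)).toENat

/-- The positive index `ν₊(S)`. -/
noncomputable def posIndex {H : Type*} [NormedAddCommGroup H] [InnerProductSpace ℂ H]
    (S : H →L[ℂ] H) : ℕ∞ :=
  ⨆ M : {M : Submodule ℂ H // ∀ x ∈ M, x ≠ 0 → 0 < (inner ℂ (S x) x : ℂ).re},
    (Module.rank ℂ (M : Submodule ℂ H)).toENat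

/-- The modulus `|C| = (C*C)^{1/2}` of a bounded operator. -/
noncomputable def absOp {H₁ H₂ : Type*} [NormedAddCommGroup H₁] [InnerProductSpace ℂ H₁]
    [NormedAddCommGroup H₂] [InnerProductSpace ℂ H₂] [CompleteSpace H₁] [CompleteSpace H₂]
    (C : H₁ →L[ℂ] H₂) : H₁ →L[ℂ] H₁ :=
  CFC.sqrt (adjoint C ∘L C)

/-- The positive square root `|C|^{1/2}` of the modulus of a bounded operator. -/
noncomputable def sqrtAbs {H₁ H₂ : Type*} [NormedAddCommGroup H₁] [InnerProductSpace ℂ H₁]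
    [NormedAddCommGroup H₂] [InnerProductSpace ℂ H₂] [CompleteSpace H₁] [CompleteSpace H₂]
    (C : H₁ →L[ℂ] H₂) : H₁ →L[ℂ] H₁ :=
  CFC.sqrt (absOp C)

/-- The block operator `[[A₁₁, A₁₂], [A₂₁, A₂₂]]` on the Hilbert direct sum `H₁ ⊕ H₂`
(realized as `WithLp 2 (H₁ × H₂)`). -/
noncomputable def blockOp {H₁ H₂ : Type*} [NormedAddCommGroup H₁] [InnerProductSpace ℂ H₁]
    [NormedAddCommGroup H₂] [InnerProductSpace ℂ H₂]
    (A11 : H₁ →L[ℂ] H₁) (A12 : H₂ →L[ℂ] H₁) (A21 : H₁ →L[ℂ] H₂) (A22 : H₂ →L[ℂ] H₂) :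
    WithLp 2 (H₁ × H₂) →L[ℂ] WithLp 2 (H₁ × H₂) :=
  ((WithLp.prodContinuousLinearEquiv 2 ℂ H₁ H₂).symm : H₁ × H₂ →L[ℂ] WithLp 2 (H₁ × H₂)) ∘L
    ((A11 ∘L fst ℂ H₁ H₂ + A12 ∘L snd ℂ H₁ H₂).prod (A21 ∘L fst ℂ H₁ H₂ + A22 ∘L snd ℂ H₁ H₂)) ∘L
    ((WithLp.prodContinuousLinearEquiv 2 ℂ H₁ H₂) : WithLp 2 (H₁ × H₂) →L[ℂ] H₁ × H₂)

section AuxProof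

open Module Submodule

/-- product of submodules as linear equiv -/
def subProdEquiv {R M N : Type*} [Ring R] [AddCommGroup M] [AddCommGroup N]
    [Module R M] [Module R N] (p : Submodule R M) (q : Submodule R N) :
    (p.prod q) ≃ₗ[R] p × q where
  toFun x := (⟨x.1.1, x.2.1⟩, ⟨x.1.2, x.2.2⟩)
  map_add' _ _ := rfl
  map_smul' _ _ := rfl
  invFun y := ⟨(y.1.1, y.2.1), ⟨y.1.2, y.2.2⟩⟩
  left_inv _ := rfl
  right_inv _ := rfl

universe u
section Congr
variable {E F : Type u} [NormedAddCommGroup E] [InnerProductSpace ℂ E]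
  [NormedAddCommGroup F] [InnerProductSpace ℂ F]

lemma negIndex_le_congr (S : E →L[ℂ] E) (S' : F →L[ℂ] F) (G : E ≃L[ℂ] F) (c : ℝ) (hc : 0 < c)
    (h : ∀ x : E, (inner ℂ (S' (G x)) (G x) : ℂ).re = c * (inner ℂ (S x) x : ℂ).re) :
    negIndex S ≤ negIndex S' := by
  refine iSup_le fun M => ?_
  have hneg : ∀ x ∈ (M : Submodule ℂ E).map (G.toLinearEquiv : E →ₗ[ℂ] F), x ≠ 0 →
      (inner ℂ (S' x) x : ℂ).re < 0 := by
    rintro y ⟨x, hx, rfl⟩ hy0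
    have hx0 : x ≠ 0 := by rintro rfl; simp at hy0
    have := M.2 x hx hx0
    have h2 := h x
    simp only [LinearEquiv.coe_coe, ContinuousLinearEquiv.coe_toLinearEquiv] at *
    nlinarith
  have : negIndex S' = ⨆ M : {M : Submodule ℂ F // ∀ x ∈ M, x ≠ 0 → (inner ℂ (S' x) x : ℂ).re < 0},
      (Module.rank ℂ (M : Submodule ℂ F)).toENat := rfl
  rw [this]
  refine le_trans ?_ (le_iSup _ ⟨(M : Submodule ℂ E).map (G.toLinearEquiv : E →ₗ[ℂ] F), hneg⟩)
  simp only
  rw [G.toLinearEquiv.rank_map_eq]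

lemma negIndex_eq_congr (S : E →L[ℂ] E) (S' : F →L[ℂ] F) (G : E ≃L[ℂ] F) (c : ℝ) (hc : 0 < c)
    (h : ∀ x : E, (inner ℂ (S' (G x)) (G x) : ℂ).re = c * (inner ℂ (S x) x : ℂ).re) :
    negIndex S = negIndex S' := by
  refine le_antisymm (negIndex_le_congr S S' G c hc h) ?_
  refine negIndex_le_congr S' S G.symm c⁻¹ (by positivity) fun y => ?_
  have := h (G.symm y)
  rw [G.apply_symm_apply] at this
  rw [this]
  field_simp

end Congr

variable {H : Type u} [NormedAddCommGroup H] [InnerProductSpace ℂ H]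

lemma negIndex_finrank_le (A : H →L[ℂ] H) (M : Submodule ℂ H) [FiniteDimensional ℂ M]
    (hM : ∀ x ∈ M, x ≠ 0 → (inner ℂ (A x) x : ℂ).re < 0) :
    (Module.finrank ℂ M : ℕ∞) ≤ negIndex A := by
  have h := le_iSup (fun M : {M : Submodule ℂ H // ∀ x ∈ M, x ≠ 0 → (inner ℂ (A x) x : ℂ).re < 0} =>
    (Module.rank ℂ (M : Submodule ℂ H)).toENat) ⟨M, hM⟩
  rw [show negIndex A = _ from rfl]
  refine le_trans ?_ h
  simp only
  rw [← Module.finrank_eq_rank]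
  simp

lemma spectral_decomp (A : H →L[ℂ] H)
    (hAsymm : ∀ x y : H, (inner ℂ (A x) y : ℂ) = inner ℂ x (A y)) (V : Submodule ℂ H)
    [FiniteDimensional ℂ V] :
    ∃ Vm Vp : Submodule ℂ H, Vm ≤ V ∧ Vp ≤ V ∧ V ≤ Vm ⊔ Vp ∧
      FiniteDimensional ℂ Vm ∧ FiniteDimensional ℂ Vp ∧
      (Module.finrank ℂ Vm + Module.finrank ℂ Vp ≤ Module.finrank ℂ V) ∧
      (∀ x ∈ Vm, x ≠ 0 → (inner ℂ (A x) x : ℂ).re < 0) ∧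
      (∀ x ∈ Vp, 0 ≤ (inner ℂ (A x) x : ℂ).re) := by
  classical
  -- the compression of A to V
  set C : V →ₗ[ℂ] V := ((orthogonalProjection V).comp (A.comp V.subtypeL)).toLinearMap with hC
  have hproj : ∀ (u : H) (w : V), (inner ℂ (orthogonalProjection V u : H) (w : H) : ℂ) = inner ℂ u (w : H) := by
    intro u w
    have := Submodule.starProjection_inner_eq_zero (K := V) u w w.2
    rw [inner_sub_left, sub_eq_zero] at this
    exact this.symm
  have hCapp : ∀ x y : V, (inner ℂ (C x) y : ℂ) = inner ℂ (A (x : H)) (y : H) := by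
    intro x y
    rw [Submodule.coe_inner]
    exact hproj (A x) y
  have hCsymm : C.IsSymmetric := by
    intro x y
    rw [hCapp, ← inner_conj_symm (x : ↥V) (C y), hCapp, inner_conj_symm, hAsymm]
  set n := Module.finrank ℂ V with hn
  set b := hCsymm.eigenvectorBasis rfl with hb
  set μ := hCsymm.eigenvalues (rfl : Module.finrank ℂ V = n) with hμ
  -- the key quadratic form formula
  have key : ∀ x : V, (inner ℂ (A (x : H)) (x : H) : ℂ).re = ∑ i, μ i * ‖b.repr x i‖ ^ 2 := by
    intro x
    rw [← hCapp x x]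
    have h1 : (inner ℂ (C x) x : ℂ) = inner ℂ (b.repr (C x)) (b.repr x) := (b.repr.inner_map_map _ _).symm
    rw [h1, PiLp.inner_apply]
    have hrepr : ∀ i, b.repr (C x) i = (μ i : ℂ) * b.repr x i := fun i =>
      hCsymm.eigenvectorBasis_apply_self_apply rfl x i
    simp_rw [hrepr]
    rw [Complex.re_sum]
    congr 1; funext i
    simp only [RCLike.inner_apply, map_mul, Complex.conj_ofReal]
    rw [show b.repr x i * ((μ i : ℂ) * (starRingEnd ℂ) (b.repr x i))
        = (μ i : ℂ) * (b.repr x i * (starRingEnd ℂ) (b.repr x i)) from by ring,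
      Complex.mul_conj, ← Complex.ofReal_mul, Complex.ofReal_re]
    simp [Complex.normSq_eq_norm_sq]
  -- spans of eigenvectors
  have hrepr_span : ∀ (s : Set (Fin n)) (x : V), x ∈ span ℂ (b '' s) →
      ∀ i ∉ s, b.repr x i = 0 := by
    intro s x hx
    induction hx using Submodule.span_induction with
    | mem y hy =>
      obtain ⟨j, hj, rfl⟩ := hy
      intro i hi
      rw [b.repr_self, EuclideanSpace.single_apply]
      exact if_neg (by rintro rfl; exact hi hj)
    | zero => simp
    | add y z _ _ hy hz => intro i hi; simp [map_add, hy i hi, hz i hi]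
    | smul c y _ hy => intro i hi; simp [map_smul, hy i hi]
  set s : Set (Fin n) := {i | μ i < 0} with hs
  set Vm' : Submodule ℂ V := span ℂ (b '' s) with hVm'
  set Vp' : Submodule ℂ V := span ℂ (b '' sᶜ) with hVp'
  have hsup : Vm' ⊔ Vp' = ⊤ := by
    rw [hVm', hVp', ← Submodule.span_union, ← Set.image_union, Set.union_compl_self,
      Set.image_univ, ← b.coe_toBasis, b.toBasis.span_eq]
  have hinf : Vm' ⊓ Vp' = ⊥ := by
    rw [Submodule.eq_bot_iff]
    rintro x ⟨hx1, hx2⟩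
    have : b.repr x = 0 := by
      ext i
      by_cases hi : i ∈ s
      · exact hrepr_span sᶜ x hx2 i (by simpa using hi)
      · exact hrepr_span s x hx1 i hi
    simpa using b.repr.injective (by simpa using this)
  have hnegm : ∀ x : V, x ∈ Vm' → x ≠ 0 → (inner ℂ (A (x : H)) (x : H) : ℂ).re < 0 := by
    intro x hx hx0
    rw [key x]
    have hle : ∀ i ∈ Finset.univ, μ i * ‖b.repr x i‖ ^ 2 ≤ (0:ℝ) := by
      intro i _
      by_cases hi : i ∈ s
      · have : μ i < 0 := hi
        nlinarith [sq_nonneg ‖b.repr x i‖]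
      · rw [hrepr_span s x hx i hi]; simp
    have hex : ∃ j, b.repr x j ≠ 0 := by
      by_contra hcon
      push_neg at hcon
      exact hx0 (b.repr.injective (by ext i; simpa using hcon i))
    obtain ⟨j, hj⟩ := hex
    have hjs : j ∈ s := by
      by_contra hjs
      exact hj (hrepr_span s x hx j hjs)
    have hstrict : μ j * ‖b.repr x j‖ ^ 2 < 0 := by
      have h1 : μ j < 0 := hjs
      have h2 : 0 < ‖b.repr x j‖ ^ 2 := pow_pos (norm_pos_iff.mpr hj) 2
      nlinarith
    calc ∑ i, μ i * ‖b.repr x i‖ ^ 2 < ∑ _i : Fin n, (0 : ℝ) :=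
          Finset.sum_lt_sum hle ⟨j, Finset.mem_univ j, hstrict⟩
      _ = 0 := by simp
  have hnonneg : ∀ x : V, x ∈ Vp' → 0 ≤ (inner ℂ (A (x : H)) (x : H) : ℂ).re := by
    intro x hx
    rw [key x]
    refine Finset.sum_nonneg fun i _ => ?_
    by_cases hi : i ∈ sᶜ
    · have : 0 ≤ μ i := not_lt.mp hi
      positivity
    · rw [hrepr_span sᶜ x hx i hi]; simp
  -- move everything to H
  refine ⟨Vm'.map V.subtype, Vp'.map V.subtype, Submodule.map_subtype_le V Vm',
    Submodule.map_subtype_le V Vp', ?_, ?_, ?_, ?_, ?_, ?_⟩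
  · rw [← Submodule.map_sup, hsup]
    intro x hx
    exact ⟨⟨x, hx⟩, trivial, rfl⟩
  · exact Module.Finite.equiv (Submodule.equivSubtypeMap V Vm')
  · exact Module.Finite.equiv (Submodule.equivSubtypeMap V Vp')
  · rw [← LinearEquiv.finrank_eq (Submodule.equivSubtypeMap V Vm'),
      ← LinearEquiv.finrank_eq (Submodule.equivSubtypeMap V Vp')]
    have := Submodule.finrank_sup_add_finrank_inf_eq Vm' Vp'
    rw [hsup, hinf, finrank_bot, finrank_top] at this
    omega
  · rintro x ⟨y, hy, rfl⟩ hx0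
    exact hnegm y hy (by simpa using hx0)
  · rintro x ⟨y, hy, rfl⟩
    exact hnonneg y hy

variable {H₂ : Type u} [NormedAddCommGroup H₂] [InnerProductSpace ℂ H₂]

lemma core_finrank_le (A : H →L[ℂ] H) (B : H₂ →L[ℂ] H₂)
    (hAsymm : ∀ x y : H, (inner ℂ (A x) y : ℂ) = inner ℂ x (A y))
    (hBsymm : ∀ x y : H₂, (inner ℂ (B x) y : ℂ) = inner ℂ x (B y))
    (k₁ k₂ : ℕ) (hk₁ : negIndex A ≤ k₁) (hk₂ : negIndex B ≤ k₂)
    (W : Submodule ℂ (H × H₂)) [FiniteDimensional ℂ W]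
    (hW : ∀ x ∈ W, x ≠ 0 → (inner ℂ (A x.1) x.1 : ℂ).re + (inner ℂ (B x.2) x.2 : ℂ).re < 0) :
    Module.finrank ℂ W ≤ k₁ + k₂ := by
  classical
  set V₁ := W.map (LinearMap.fst ℂ H H₂) with hV₁
  set V₂ := W.map (LinearMap.snd ℂ H H₂) with hV₂
  haveI : FiniteDimensional ℂ V₁ := Module.Finite.map W _
  haveI : FiniteDimensional ℂ V₂ := Module.Finite.map W _
  obtain ⟨V1m, V1p, h1m, h1p, h1le, h1fm, h1fp, h1fr, h1neg, h1pos⟩ :=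
    spectral_decomp A hAsymm V₁
  obtain ⟨V2m, V2p, h2m, h2p, h2le, h2fm, h2fp, h2fr, h2neg, h2pos⟩ :=
    spectral_decomp B hBsymm V₂
  set N := V1p.prod V2p with hN
  haveI : FiniteDimensional ℂ N := Module.Finite.equiv (subProdEquiv V1p V2p).symm
  haveI : FiniteDimensional ℂ (V₁.prod V₂) := Module.Finite.equiv (subProdEquiv V₁ V₂).symm
  have hWle : W ≤ V₁.prod V₂ := fun x hx => ⟨⟨x, hx, rfl⟩, ⟨x, hx, rfl⟩⟩
  have hNle : N ≤ V₁.prod V₂ := Submodule.prod_mono h1p h2p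
  have hdisj : W ⊓ N = ⊥ := by
    rw [Submodule.eq_bot_iff]
    rintro x ⟨hxW, hx1, hx2⟩
    by_contra hx0
    have hlt := hW x hxW hx0
    have g1 := h1pos x.1 hx1
    have g2 := h2pos x.2 hx2
    linarith
  have hsum : Module.finrank ℂ W + Module.finrank ℂ N ≤
      Module.finrank ℂ V₁ + Module.finrank ℂ V₂ := by
    have e1 := Submodule.finrank_sup_add_finrank_inf_eq W N
    rw [hdisj, finrank_bot, add_zero] at e1
    have e2 : Module.finrank ℂ ↥(W ⊔ N) ≤ Module.finrank ℂ (V₁.prod V₂) :=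
      Submodule.finrank_mono (sup_le hWle hNle)
    have e3 : Module.finrank ℂ (V₁.prod V₂) = Module.finrank ℂ V₁ + Module.finrank ℂ V₂ := by
      rw [LinearEquiv.finrank_eq (subProdEquiv V₁ V₂), Module.finrank_prod]
    omega
  have hNfr : Module.finrank ℂ N = Module.finrank ℂ V1p + Module.finrank ℂ V2p := by
    rw [LinearEquiv.finrank_eq (subProdEquiv V1p V2p), Module.finrank_prod]
  have hV1fr : Module.finrank ℂ V₁ ≤ Module.finrank ℂ V1m + Module.finrank ℂ V1p := by
    have e1 := Submodule.finrank_sup_add_finrank_inf_eq V1m V1p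
    have e2 : Module.finrank ℂ V₁ ≤ Module.finrank ℂ ↥(V1m ⊔ V1p) :=
      Submodule.finrank_mono h1le
    omega
  have hV2fr : Module.finrank ℂ V₂ ≤ Module.finrank ℂ V2m + Module.finrank ℂ V2p := by
    have e1 := Submodule.finrank_sup_add_finrank_inf_eq V2m V2p
    have e2 : Module.finrank ℂ V₂ ≤ Module.finrank ℂ ↥(V2m ⊔ V2p) :=
      Submodule.finrank_mono h2le
    omega
  have hm1 : Module.finrank ℂ V1m ≤ k₁ := by
    have := le_trans (negIndex_finrank_le A V1m h1neg) hk₁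
    exact_mod_cast this
  have hm2 : Module.finrank ℂ V2m ≤ k₂ := by
    have := le_trans (negIndex_finrank_le B V2m h2neg) hk₂
    exact_mod_cast this
  omega

lemma core_rank_le (A : H →L[ℂ] H) (B : H₂ →L[ℂ] H₂)
    (hAsymm : ∀ x y : H, (inner ℂ (A x) y : ℂ) = inner ℂ x (A y))
    (hBsymm : ∀ x y : H₂, (inner ℂ (B x) y : ℂ) = inner ℂ x (B y))
    (k₁ k₂ : ℕ) (hk₁ : negIndex A ≤ k₁) (hk₂ : negIndex B ≤ k₂)
    (M : Submodule ℂ (H × H₂))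
    (hM : ∀ x ∈ M, x ≠ 0 → (inner ℂ (A x.1) x.1 : ℂ).re + (inner ℂ (B x.2) x.2 : ℂ).re < 0) :
    (Module.rank ℂ M).toENat ≤ ((k₁ + k₂ : ℕ) : ℕ∞) := by
  classical
  have hrank : Module.rank ℂ M ≤ ((k₁ + k₂ : ℕ) : Cardinal) := by
    refine rank_le fun s hs => ?_
    -- the span of s in H × H₂
    have hli : LinearIndependent ℂ (fun i : s => ((i : M) : H × H₂)) :=
      hs.map' M.subtype (Submodule.ker_subtype M)
    set W := span ℂ (Set.range fun i : s => ((i : M) : H × H₂)) with hW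
    haveI : FiniteDimensional ℂ W := FiniteDimensional.span_of_finite ℂ (Set.finite_range _)
    have hWM : W ≤ M := by
      rw [hW, Submodule.span_le]
      rintro x ⟨i, rfl⟩
      exact ((i : M) : M).2
    have hfr : Module.finrank ℂ W = s.card := by
      rw [hW, finrank_span_eq_card hli, Fintype.card_coe]
    have := core_finrank_le A B hAsymm hBsymm k₁ k₂ hk₁ hk₂ W
      (fun x hx hx0 => hM x (hWM hx) hx0)
    omega
  calc (Module.rank ℂ M).toENat ≤ (((k₁ + k₂ : ℕ) : Cardinal)).toENat :=
        Cardinal.toENat.monotone' hrank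
    _ = ((k₁ + k₂ : ℕ) : ℕ∞) := by simp

lemma blockOp_fst (A11 : H →L[ℂ] H) (A12 : H₂ →L[ℂ] H) (A21 : H →L[ℂ] H₂) (A22 : H₂ →L[ℂ] H₂)
    (x : WithLp 2 (H × H₂)) :
    (blockOp A11 A12 A21 A22 x).fst = A11 x.fst + A12 x.snd := rfl

lemma blockOp_snd (A11 : H →L[ℂ] H) (A12 : H₂ →L[ℂ] H) (A21 : H →L[ℂ] H₂) (A22 : H₂ →L[ℂ] H₂)
    (x : WithLp 2 (H × H₂)) :
    (blockOp A11 A12 A21 A22 x).snd = A21 x.fst + A22 x.snd := rfl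

lemma blockOp_inner (A11 : H →L[ℂ] H) (A12 : H₂ →L[ℂ] H) (A21 : H →L[ℂ] H₂) (A22 : H₂ →L[ℂ] H₂)
    (x y : WithLp 2 (H × H₂)) :
    (inner ℂ (blockOp A11 A12 A21 A22 x) y : ℂ) =
      inner ℂ (A11 x.fst + A12 x.snd) y.fst + inner ℂ (A21 x.fst + A22 x.snd) y.snd := rfl

instance negSubNonempty (S : H →L[ℂ] H) :
    Nonempty {M : Submodule ℂ H // ∀ x ∈ M, x ≠ 0 → (inner ℂ (S x) x : ℂ).re < 0} :=
  ⟨⟨⊥, fun x hx hx0 => absurd (Submodule.mem_bot ℂ |>.mp hx) hx0⟩⟩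

lemma negIndex_blockOp_diag (A : H →L[ℂ] H) (B : H₂ →L[ℂ] H₂)
    (hAsymm : ∀ x y : H, (inner ℂ (A x) y : ℂ) = inner ℂ x (A y))
    (hBsymm : ∀ x y : H₂, (inner ℂ (B x) y : ℂ) = inner ℂ x (B y)) :
    negIndex (blockOp A 0 0 B) = negIndex A + negIndex B := by
  classical
  set e := WithLp.prodContinuousLinearEquiv 2 ℂ H H₂ with he
  have hq : ∀ x : WithLp 2 (H × H₂), (inner ℂ (blockOp A 0 0 B x) x : ℂ).re =
      (inner ℂ (A x.fst) x.fst : ℂ).re + (inner ℂ (B x.snd) x.snd : ℂ).re := by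
    intro x
    rw [blockOp_inner]
    simp
  refine le_antisymm ?_ ?_
  · -- hard direction
    by_cases hA : negIndex A = ⊤
    · rw [hA, top_add]; exact le_top
    by_cases hB : negIndex B = ⊤
    · rw [hB, add_top]; exact le_top
    obtain ⟨k₁, hk₁⟩ := WithTop.ne_top_iff_exists.mp hA
    obtain ⟨k₂, hk₂⟩ := WithTop.ne_top_iff_exists.mp hB
    refine iSup_le fun M => ?_
    have hM' : ∀ y ∈ (M : Submodule ℂ (WithLp 2 (H × H₂))).map (e.toLinearEquiv : WithLp 2 (H × H₂) →ₗ[ℂ] H × H₂),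
        y ≠ 0 → (inner ℂ (A y.1) y.1 : ℂ).re + (inner ℂ (B y.2) y.2 : ℂ).re < 0 := by
      rintro y ⟨x, hx, rfl⟩ hy0
      have hx0 : x ≠ 0 := by rintro rfl; simp at hy0
      have := M.2 x hx hx0
      rw [hq x] at this
      simpa [he] using this
    have hle := core_rank_le A B hAsymm hBsymm k₁ k₂ (le_of_eq hk₁.symm) (le_of_eq hk₂.symm)
      _ hM'
    rw [e.toLinearEquiv.rank_map_eq] at hle
    refine le_trans hle ?_
    rw [← hk₁, ← hk₂]
    simp
    exact le_rfl
  · have hne1 : Nonempty {M : Submodule ℂ H // ∀ x ∈ M, x ≠ 0 → (inner ℂ (A x) x : ℂ).re < 0} :=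
      inferInstance
    rw [show negIndex A + negIndex B =
      ⨆ M₁ : {M : Submodule ℂ H // ∀ x ∈ M, x ≠ 0 → (inner ℂ (A x) x : ℂ).re < 0},
      ⨆ M₂ : {M : Submodule ℂ H₂ // ∀ x ∈ M, x ≠ 0 → (inner ℂ (B x) x : ℂ).re < 0},
        ((Module.rank ℂ (M₁ : Submodule ℂ H)).toENat +
          (Module.rank ℂ (M₂ : Submodule ℂ H₂)).toENat) from by
      rw [negIndex, negIndex, ENat.iSup_add]
      exact iSup_congr fun M₁ => by rw [ENat.add_iSup]]
    refine iSup_le fun M₁ => iSup_le fun M₂ => ?_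
    set P := ((M₁ : Submodule ℂ H).prod (M₂ : Submodule ℂ H₂)).map
      (e.symm.toLinearEquiv : H × H₂ →ₗ[ℂ] WithLp 2 (H × H₂)) with hP
    have hPneg : ∀ x ∈ P, x ≠ 0 → (inner ℂ (blockOp A 0 0 B x) x : ℂ).re < 0 := by
      rintro x ⟨y, ⟨hy1, hy2⟩, rfl⟩ hx0
      have hy0 : y ≠ 0 := by rintro rfl; simp at hx0
      rw [hq]
      show (inner ℂ (A y.1) y.1 : ℂ).re + (inner ℂ (B y.2) y.2 : ℂ).re < 0
      rcases eq_or_ne y.1 0 with h1 | h1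
      · have h2 : y.2 ≠ 0 := by
          intro h2; exact hy0 (Prod.ext h1 h2)
        have := M₂.2 y.2 hy2 h2
        rw [h1]; simpa using this
      · have hA1 := M₁.2 y.1 hy1 h1
        rcases eq_or_ne y.2 0 with h2 | h2
        · rw [h2]; simpa using hA1
        · have hB2 := M₂.2 y.2 hy2 h2
          linarith
    have hle := le_iSup (fun M : {M : Submodule ℂ (WithLp 2 (H × H₂)) //
        ∀ x ∈ M, x ≠ 0 → (inner ℂ (blockOp A 0 0 B x) x : ℂ).re < 0} =>
      (Module.rank ℂ (M : Submodule ℂ (WithLp 2 (H × H₂)))).toENat) ⟨P, hPneg⟩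
    refine le_trans ?_ hle
    simp only [hP]
    rw [e.symm.toLinearEquiv.rank_map_eq,
      (subProdEquiv (M₁ : Submodule ℂ H) (M₂ : Submodule ℂ H₂)).rank_eq, rank_prod', map_add]

section SA

variable [CompleteSpace H]

lemma sa_symm {S : H →L[ℂ] H} (hS : IsSelfAdjoint S) :
    ∀ x y : H, (inner ℂ (S x) y : ℂ) = inner ℂ x (S y) := fun x y => by
  rw [← ContinuousLinearMap.adjoint_inner_left S, hS.adjoint_eq]

end SA

end AuxProof

section MainProof

open Module Submodule

universe u_main

theorem statement_9
    {H : Type*} [NormedAddCommGroup H] [InnerProductSpace ℂ H] [CompleteSpace H]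
    (T : H →L[ℂ] H) (hT : IsSelfAdjoint T)
    (J : H →L[ℂ] H) (hJsa : IsSelfAdjoint J) (hJsq : J ∘L J = 1)
    (hfinJ : negIndex J < ⊤) :
    negIndex (J - T ∘L J ∘L T) + negIndex J = negIndex (J - T) + negIndex (J + T) ∧
    (negIndex (J - T ∘L J ∘L T) < ⊤ ↔ negIndex (J - T) < ⊤ ∧ negIndex (J + T) < ⊤) := by
  have hJm := sa_symm hJsa
  have hTm := sa_symm hT
  have hJJ : ∀ w : H, J (J w) = w := fun w => by
    have := congrArg (fun (S : H →L[ℂ] H) => S w) hJsq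
    simpa using this
  have hSubSymm : ∀ x y : H, (inner ℂ ((J - T ∘L J ∘L T) x) y : ℂ) = inner ℂ x ((J - T ∘L J ∘L T) y) := by
    intro x y
    simp only [ContinuousLinearMap.sub_apply, ContinuousLinearMap.comp_apply,
      inner_sub_left, inner_sub_right, hJm, hTm]
  have hAddSymm : ∀ x y : H, (inner ℂ ((J + T) x) y : ℂ) = inner ℂ x ((J + T) y) := by
    intro x y
    simp only [ContinuousLinearMap.add_apply, inner_add_left, inner_add_right, hJm, hTm]
  have hSubSymm' : ∀ x y : H, (inner ℂ ((J - T) x) y : ℂ) = inner ℂ x ((J - T) y) := by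
    intro x y
    simp only [ContinuousLinearMap.sub_apply, inner_sub_left, inner_sub_right, hJm, hTm]
  -- the two equivalences
  have hG1inv : ∀ x : WithLp 2 (H × H),
      blockOp 1 (-(J ∘L T)) 0 1 (blockOp 1 (J ∘L T) 0 1 x) = x := by
    intro x
    refine (WithLp.ext_iff _).mpr (Prod.ext (?_ : WithLp.fst _ = WithLp.fst _) (?_ : WithLp.snd _ = WithLp.snd _)) <;>
      simp [blockOp_fst, blockOp_snd, hJJ]
  have hG1inv' : ∀ x : WithLp 2 (H × H),
      blockOp 1 (J ∘L T) 0 1 (blockOp 1 (-(J ∘L T)) 0 1 x) = x := by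
    intro x
    refine (WithLp.ext_iff _).mpr (Prod.ext (?_ : WithLp.fst _ = WithLp.fst _) (?_ : WithLp.snd _ = WithLp.snd _)) <;>
      simp [blockOp_fst, blockOp_snd, hJJ]
  have hG2inv1 : ∀ x : WithLp 2 (H × H),
      ((2:ℂ)⁻¹ • blockOp (1 : H →L[ℂ] H) 1 1 (-1)) (blockOp 1 1 1 (-1) x) = x := by
    intro x
    refine (WithLp.ext_iff _).mpr (Prod.ext (?_ : WithLp.fst _ = WithLp.fst _) (?_ : WithLp.snd _ = WithLp.snd _))
    · show (2:ℂ)⁻¹ • ((blockOp (1 : H →L[ℂ] H) 1 1 (-1)) (blockOp 1 1 1 (-1) x)).fst = x.fst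
      rw [blockOp_fst, blockOp_fst, blockOp_snd]
      simp only [ContinuousLinearMap.one_apply, ContinuousLinearMap.neg_apply]
      module
    · show (2:ℂ)⁻¹ • ((blockOp (1 : H →L[ℂ] H) 1 1 (-1)) (blockOp 1 1 1 (-1) x)).snd = x.snd
      rw [blockOp_snd, blockOp_fst, blockOp_snd]
      simp only [ContinuousLinearMap.one_apply, ContinuousLinearMap.neg_apply]
      module
  have hG2inv2 : ∀ x : WithLp 2 (H × H),
      blockOp (1 : H →L[ℂ] H) 1 1 (-1) (((2:ℂ)⁻¹ • blockOp (1 : H →L[ℂ] H) 1 1 (-1)) x) = x := by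
    intro x
    have hg : ((2:ℂ)⁻¹ • blockOp (1 : H →L[ℂ] H) 1 1 (-1)) x
        = (2:ℂ)⁻¹ • (blockOp (1 : H →L[ℂ] H) 1 1 (-1) x) := rfl
    refine (WithLp.ext_iff _).mpr (Prod.ext (?_ : WithLp.fst _ = WithLp.fst _) (?_ : WithLp.snd _ = WithLp.snd _))
    · rw [blockOp_fst, hg]
      show (2:ℂ)⁻¹ • ((blockOp (1 : H →L[ℂ] H) 1 1 (-1) x)).fst
          + (2:ℂ)⁻¹ • ((blockOp (1 : H →L[ℂ] H) 1 1 (-1) x)).snd = x.fst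
      rw [blockOp_fst, blockOp_snd]
      simp only [ContinuousLinearMap.one_apply, ContinuousLinearMap.neg_apply]
      module
    · rw [blockOp_snd, hg]
      show (2:ℂ)⁻¹ • ((blockOp (1 : H →L[ℂ] H) 1 1 (-1) x)).fst
          + (-1 : H →L[ℂ] H) ((2:ℂ)⁻¹ • ((blockOp (1 : H →L[ℂ] H) 1 1 (-1) x)).snd) = x.snd
      rw [blockOp_fst, blockOp_snd]
      simp only [ContinuousLinearMap.one_apply, ContinuousLinearMap.neg_apply]
      module
  -- the equivalences
  set G₁ : WithLp 2 (H × H) ≃L[ℂ] WithLp 2 (H × H) :=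
    ContinuousLinearEquiv.equivOfInverse (blockOp 1 (J ∘L T) 0 1) (blockOp 1 (-(J ∘L T)) 0 1)
      hG1inv hG1inv' with hG₁
  set G₂ : WithLp 2 (H × H) ≃L[ℂ] WithLp 2 (H × H) :=
    ContinuousLinearEquiv.equivOfInverse (blockOp 1 1 1 (-1)) ((2:ℂ)⁻¹ • blockOp 1 1 1 (-1))
      hG2inv1 hG2inv2 with hG₂
  -- form identities
  have hid1 : ∀ x : WithLp 2 (H × H),
      (inner ℂ (blockOp J 0 0 (J - T ∘L J ∘L T) (G₁ x)) (G₁ x) : ℂ).re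
        = 1 * (inner ℂ (blockOp J T T J x) x : ℂ).re := by
    intro x
    rw [one_mul]
    congr 1
    rw [blockOp_inner, blockOp_inner]
    have hf : (G₁ x).fst = x.fst + J (T x.snd) := by
      rw [hG₁, ContinuousLinearEquiv.equivOfInverse_apply, blockOp_fst]; simp
    have hs : (G₁ x).snd = x.snd := by
      rw [hG₁, ContinuousLinearEquiv.equivOfInverse_apply, blockOp_snd]; simp
    rw [hf, hs]
    simp only [ContinuousLinearMap.zero_apply, ContinuousLinearMap.add_apply,
      ContinuousLinearMap.sub_apply, ContinuousLinearMap.comp_apply, add_zero, zero_add,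
      map_add, inner_add_left, inner_add_right, inner_sub_left]
    simp only [hJJ, hJm, hTm]
    ring
  have hid2 : ∀ x : WithLp 2 (H × H),
      (inner ℂ (blockOp J T T J (G₂ x)) (G₂ x) : ℂ).re
        = 2 * (inner ℂ (blockOp (J + T) 0 0 (J - T) x) x : ℂ).re := by
    intro x
    have h2 : ((2:ℝ) : ℂ) = (2:ℂ) := by norm_num
    rw [show (2:ℝ) * (inner ℂ (blockOp (J + T) 0 0 (J - T) x) x : ℂ).re
        = ((2:ℂ) * (inner ℂ (blockOp (J + T) 0 0 (J - T) x) x : ℂ)).re by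
      rw [Complex.mul_re]; simp]
    congr 1
    rw [blockOp_inner, blockOp_inner]
    have hf : (G₂ x).fst = x.fst + x.snd := by
      rw [hG₂, ContinuousLinearEquiv.equivOfInverse_apply, blockOp_fst]; simp
    have hs : (G₂ x).snd = x.fst - x.snd := by
      rw [hG₂, ContinuousLinearEquiv.equivOfInverse_apply, blockOp_snd]; simp [sub_eq_add_neg]
    rw [hf, hs]
    simp only [ContinuousLinearMap.zero_apply, ContinuousLinearMap.add_apply,
      ContinuousLinearMap.sub_apply, add_zero, zero_add,
      map_add, map_sub, inner_add_left, inner_add_right, inner_sub_left, inner_sub_right]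
    simp only [hJm, hTm]
    ring
  -- chain of equalities
  have e1 : negIndex (blockOp J T T J) = negIndex (blockOp J 0 0 (J - T ∘L J ∘L T)) :=
    negIndex_eq_congr (blockOp J T T J) (blockOp J 0 0 (J - T ∘L J ∘L T)) G₁ 1 one_pos hid1
  have e2 : negIndex (blockOp J T T J) = negIndex (blockOp (J + T) 0 0 (J - T)) :=
    (negIndex_eq_congr (blockOp (J + T) 0 0 (J - T)) (blockOp J T T J) G₂ 2 two_pos hid2).symm
  have e3 : negIndex (blockOp J 0 0 (J - T ∘L J ∘L T))
      = negIndex J + negIndex (J - T ∘L J ∘L T) :=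
    negIndex_blockOp_diag J (J - T ∘L J ∘L T) hJm hSubSymm
  have e4 : negIndex (blockOp (J + T) 0 0 (J - T))
      = negIndex (J + T) + negIndex (J - T) :=
    negIndex_blockOp_diag (J + T) (J - T) hAddSymm hSubSymm'
  have key : negIndex (J - T ∘L J ∘L T) + negIndex J = negIndex (J - T) + negIndex (J + T) := by
    have := e1.symm.trans e2
    rw [e3, e4] at this
    rw [add_comm (negIndex (J - T ∘L J ∘L T)), add_comm (negIndex (J - T))]
    exact this
  refine ⟨key, ?_, ?_⟩
  · intro hfin
    have hlt : negIndex (J - T) + negIndex (J + T) < ⊤ := by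
      rw [← key]
      exact WithTop.add_lt_top.mpr ⟨hfin, hfinJ⟩
    exact ⟨(WithTop.add_lt_top.mp hlt).1, (WithTop.add_lt_top.mp hlt).2⟩
  · rintro ⟨h1, h2⟩
    have hlt : negIndex (J - T ∘L J ∘L T) + negIndex J < ⊤ := by
      rw [key]
      exact WithTop.add_lt_top.mpr ⟨h1, h2⟩
    exact (WithTop.add_lt_top.mp hlt).1


end MainProof

end
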